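/- Let σ_1,…,σ_n be positive semidefinite matrices on ℂ^D, and suppose that for some index i, the column space of σ_i is contained in the sum of the column spaces of σ_j for j ≠ i. Then σ_1,…,σ_n are not unambiguously distinguishable: for any positive semidefinite matrix Π with tr(Π σ_j) = 0 for all j ≠ i, one also has tr(Π σ_i) = 0. -/

import Mathlib

open Matrix Kronecker
open scoped ComplexOrder

noncomputable section

/-- A quantum operation on ℂ^d given by a finite family of Kraus operators
satisfying the completeness condition. -/
structure QuantumOp (d : ℕ) where
  m : ℕ
  K : Fin m → Matrix (Fin d) (Fin d) ℂ
  complete : ∑ k, (K k)ᴴ * K k = 1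

/-- The support of a quantum operation: the span of its Kraus operators. -/
def QuantumOp.supp {d : ℕ} (E : QuantumOp d) : Submodule ℂ (Matrix (Fin d) (Fin d) ℂ) :=
  Submodule.span ℂ (Set.range E.K)

/-- The output state (E ⊗ I)(|ψ⟩⟨ψ|) = Σ_k (E^k ⊗ I)|ψ⟩⟨ψ|(E^k ⊗ I)†. -/
def QuantumOp.output {d : ℕ} (E : QuantumOp d) (da : ℕ) (ψ : Fin d × Fin da → ℂ) :
    Matrix (Fin d × Fin da) (Fin d × Fin da) ℂ :=
  ∑ k, (E.K k ⊗ₖ (1 : Matrix (Fin da) (Fin da) ℂ)) * vecMulVec ψ (star ψ) *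
    (E.K k ⊗ₖ (1 : Matrix (Fin da) (Fin da) ℂ))ᴴ

/-- States σ_1, …, σ_n are unambiguously distinguishable if there is a POVM
{Π_0, Π_1, …, Π_n} with tr(Π_i σ_j) = 0 for i ≠ j and tr(Π_i σ_i) > 0. -/
def UnambiguouslyDistinguishable {μ : Type*} [Fintype μ] [DecidableEq μ] {n : ℕ}
    (σ : Fin n → Matrix μ μ ℂ) : Prop :=
  ∃ P0 : Matrix μ μ ℂ, ∃ P : Fin n → Matrix μ μ ℂ,
    P0.PosSemidef ∧ (∀ i, (P i).PosSemidef) ∧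
    (P0 + ∑ i, P i = 1) ∧
    (∀ i j, i ≠ j → (P i * σ j).trace = 0) ∧
    (∀ i, 0 < (P i * σ i).trace)


lemma trace_self_mul_conjTranspose_eq_zero {m : ℕ} {A : Matrix (Fin m) (Fin m) ℂ}
    (h : (A * Aᴴ).trace = 0) : A = 0 := by
  have hsum : ∑ i, ∑ j, Complex.normSq (A i j) = 0 := by
    have : (A * Aᴴ).trace = ((∑ i, ∑ j, Complex.normSq (A i j) : ℝ) : ℂ) := by
      simp only [Matrix.trace, Matrix.diag, Matrix.mul_apply, Matrix.conjTranspose_apply]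
      push_cast
      refine Finset.sum_congr rfl fun i _ => Finset.sum_congr rfl fun j _ => ?_
      rw [← Complex.mul_conj]
      rfl
    rw [this] at h
    exact_mod_cast h
  ext i j
  have h1 : ∀ i ∈ Finset.univ, (0:ℝ) ≤ ∑ j, Complex.normSq (A i j) :=
    fun i _ => Finset.sum_nonneg fun j _ => Complex.normSq_nonneg _
  have h2 := (Finset.sum_eq_zero_iff_of_nonneg h1).mp hsum i (Finset.mem_univ i)
  have h3 := (Finset.sum_eq_zero_iff_of_nonneg
    (fun j _ => Complex.normSq_nonneg (A i j))).mp h2 j (Finset.mem_univ j)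
  simpa using Complex.normSq_eq_zero.mp h3

open scoped MatrixOrder in
lemma psd_mul_eq_zero_of_trace_eq_zero {D : ℕ} {P Q : Matrix (Fin D) (Fin D) ℂ}
    (hP : P.PosSemidef) (hQ : Q.PosSemidef) (htr : (P * Q).trace = 0) : P * Q = 0 := by
  set B := CFC.sqrt P with hBdef
  set S := CFC.sqrt Q with hSdef
  have hBB : B * B = P := CFC.sqrt_mul_sqrt_self P hP.nonneg
  have hSS : S * S = Q := CFC.sqrt_mul_sqrt_self Q hQ.nonneg
  have hBH : Bᴴ = B := (CFC.sqrt_nonneg P).posSemidef.isHermitian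
  have hSH : Sᴴ = S := (CFC.sqrt_nonneg Q).posSemidef.isHermitian
  have hct : (B * S)ᴴ = S * B := by rw [Matrix.conjTranspose_mul, hBH, hSH]
  have htr2 : ((B * S) * (B * S)ᴴ).trace = 0 := by
    rw [hct]
    have e : B * S * (S * B) = (B * (S * S)) * B := by noncomm_ring
    rw [e, Matrix.trace_mul_comm, ← mul_assoc, hBB, hSS]
    exact htr
  have hBS : B * S = 0 :=
    trace_self_mul_conjTranspose_eq_zero htr2
  rw [← hBB, ← hSS]
  calc B * B * (S * S) = B * (B * S) * S := by noncomm_ring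
  _ = 0 := by rw [hBS]; simp

/-- if the column space of σ_i is contained in the sum of the column
spaces of the σ_j, j ≠ i, then σ_1, …, σ_n are not unambiguously distinguishable;
indeed any PSD Π with tr(Π σ_j) = 0 for all j ≠ i also has tr(Π σ_i) = 0. -/
theorem not_unambig_of_range_le_sup {D n : ℕ}
    (σ : Fin n → Matrix (Fin D) (Fin D) ℂ) (hpsd : ∀ k, (σ k).PosSemidef) (i : Fin n)
    (h : LinearMap.range (σ i).mulVecLin ≤ ⨆ j ≠ i, LinearMap.range (σ j).mulVecLin) :
    (¬ UnambiguouslyDistinguishable σ) ∧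
    ∀ P : Matrix (Fin D) (Fin D) ℂ, P.PosSemidef →
      (∀ j, j ≠ i → (P * σ j).trace = 0) → (P * σ i).trace = 0 := by
  have key : ∀ P : Matrix (Fin D) (Fin D) ℂ, P.PosSemidef →
      (∀ j, j ≠ i → (P * σ j).trace = 0) → (P * σ i).trace = 0 := by
    intro P hP htr
    have hker : ∀ j, j ≠ i → LinearMap.range (σ j).mulVecLin ≤ LinearMap.ker P.mulVecLin := by
      intro j hj
      have hz : P * σ j = 0 := psd_mul_eq_zero_of_trace_eq_zero hP (hpsd j) (htr j hj)
      rintro x ⟨v, rfl⟩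
      simp only [LinearMap.mem_ker, Matrix.mulVecLin_apply, Matrix.mulVec_mulVec, hz,
        Matrix.zero_mulVec]
    have hi : LinearMap.range (σ i).mulVecLin ≤ LinearMap.ker P.mulVecLin := by
      refine le_trans h ?_
      exact iSup_le fun j => iSup_le fun hj => hker j hj
    have hz : P * σ i = 0 := by
      ext a b
      have : P *ᵥ (σ i) *ᵥ Pi.single b 1 = 0 :=
        hi ⟨Pi.single b 1, rfl⟩
      have h2 : (P * σ i) *ᵥ Pi.single b 1 = 0 := by
        rw [← Matrix.mulVec_mulVec]; exact this
      have := congr_fun h2 a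
      rwa [Matrix.mulVec_single_one] at this
    rw [hz]; simp
  refine ⟨?_, key⟩
  rintro ⟨P0, P, hP0, hPk, hsum, hoff, hdiag⟩
  have := key (P i) (hPk i) (fun j hj => hoff i j (Ne.symm hj))
  exact absurd this (ne_of_gt (hdiag i))
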